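/- (First theorem on passing ε-δ in a chain.) Let κ₁ be a Markov kernel from M to Ω₁, κ₂ a Markov kernel from Ω₁ to Ω₂, P ∈ M, X₁ ⊆ Ω₁ and X₂ ⊆ Ω₂ measurable, and m a measure on M. Suppose P is (ε₁, δ₁)-accountable for X₁ under κ₁ (so κ₁(P)(X₁) > ε₁ ≥ 0), suppose ε₂ > 0 and κ₂(x)(X₂) ≥ ε₂ for every x ∈ X₁, and suppose δ > m(A'_{ε₁ε₂}), where A'_ε = {a ∈ M : a ≠ P and (κ₂ ∘ κ₁)(a)(X₂) > ε}. Then (κ₂ ∘ κ₁)(P)(X₂) > ε₁ · ε₂, and P is (ε₁ε₂, δ)-accountable for X₂ under the composite kernel κ₂ ∘ κ₁. -/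

import Mathlib

open MeasureTheory ProbabilityTheory
open scoped ENNReal

/-- First theorem on passing ε-δ in a chain: if `P` is `(ε₁, δ₁)`-accountable
for `X₁` under `κ₁`, `ε₂ > 0` with `κ₂ x X₂ ≥ ε₂` on `X₁`, and `δ > m A'_{ε₁ε₂}` (rival set
for the composite kernel), then `(κ₂ ∘ₖ κ₁) P X₂ > ε₁ * ε₂` and `P` is `(ε₁ε₂, δ)`-accountable
for `X₂` under `κ₂ ∘ₖ κ₁`. -/
theorem chain_accountability_first {M Ω₁ Ω₂ : Type*}
    [MeasurableSpace M] [MeasurableSpace Ω₁] [MeasurableSpace Ω₂]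
    (κ₁ : Kernel M Ω₁) [IsMarkovKernel κ₁] (κ₂ : Kernel Ω₁ Ω₂) [IsMarkovKernel κ₂]
    (P : M) (X₁ : Set Ω₁) (X₂ : Set Ω₂) (hX₁ : MeasurableSet X₁) (hX₂ : MeasurableSet X₂)
    (m : Measure M) (ε₁ δ₁ ε₂ δ : ℝ≥0∞)
    (hacc₁ : ε₁ < κ₁ P X₁ ∧ m {a : M | a ≠ P ∧ ε₁ < κ₁ a X₁} < δ₁)
    (hε₂ : 0 < ε₂) (h₂ : ∀ x ∈ X₁, ε₂ ≤ κ₂ x X₂)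
    (hδ : m {a : M | a ≠ P ∧ ε₁ * ε₂ < (κ₂ ∘ₖ κ₁) a X₂} < δ) :
    ε₁ * ε₂ < (κ₂ ∘ₖ κ₁) P X₂ ∧
      (ε₁ * ε₂ < (κ₂ ∘ₖ κ₁) P X₂ ∧
        m {a : M | a ≠ P ∧ ε₁ * ε₂ < (κ₂ ∘ₖ κ₁) a X₂} < δ) := by
  obtain ⟨h₁, _⟩ := hacc₁
  -- X₁ is nonempty since κ₁ P X₁ > ε₁ ≥ 0
  have hne : X₁.Nonempty := by
    by_contra h
    rw [Set.not_nonempty_iff_eq_empty] at h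
    simp [h] at h₁
  obtain ⟨x₀, hx₀⟩ := hne
  have hε₂1 : ε₂ ≤ 1 := (h₂ x₀ hx₀).trans (prob_le_one)
  have key : ε₁ * ε₂ < (κ₂ ∘ₖ κ₁) P X₂ := by
    have h1 : ε₁ * ε₂ < κ₁ P X₁ * ε₂ :=
      ENNReal.mul_lt_mul_left hε₂.ne' (hε₂1.trans_lt ENNReal.one_lt_top).ne h₁
    refine h1.trans_le ?_
    rw [Kernel.comp_apply' _ _ _ hX₂]
    calc κ₁ P X₁ * ε₂ = ∫⁻ _ in X₁, ε₂ ∂(κ₁ P) := by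
          rw [setLIntegral_const, mul_comm]
      _ ≤ ∫⁻ x in X₁, κ₂ x X₂ ∂(κ₁ P) :=
          setLIntegral_mono (Kernel.measurable_coe κ₂ hX₂) h₂
      _ ≤ ∫⁻ x, κ₂ x X₂ ∂(κ₁ P) := setLIntegral_le_lintegral _ _
  exact ⟨key, key, hδ⟩
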